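/- Let n ≥ 2 and let U(sl_n) be the universal enveloping algebra over ℂ of the Lie algebra sl_n of traceless n×n complex matrices, with canonical embedding ι : sl_n → U(sl_n). For 1 ≤ i ≤ j ≤ n−1 let x_{[i,j]} := E_{i,j+1} (the matrix unit with a single 1 in position (i, j+1)). Then the ℤ-subalgebra of U(sl_n) generated by all divided powers ι(x_{[i,j]})^t / t! (1 ≤ i ≤ j ≤ n−1, t ∈ ℕ) equals the ℤ-subalgebra generated by the simple-root divided powers ι(E_{i,i+1})^t / t! (1 ≤ i ≤ n−1, t ∈ ℕ). -/

import Mathlib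

open LieAlgebra.SpecialLinear UniversalEnvelopingAlgebra

section Identity

open Finset LinearMap

variable {R : Type*} [Ring R] [Algebra ℂ R]

private lemma comm_pow {b c : R} (hbc : b * c = c * b) : ∀ k : ℕ, c * b ^ k = b ^ k * c := by
  intro k
  induction k with
  | zero => simp
  | succ k ih => rw [pow_succ, ← mul_assoc, ih, mul_assoc, ← hbc, mul_assoc]

private lemma step1 {a b c : R} (hab : a * b - b * a = c) (hbc : b * c = c * b) :
    ∀ m : ℕ, a * b ^ (m + 1) - b ^ (m + 1) * a = (m + 1) • (c * b ^ m) := by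
  have hba : a * b = b * a + c := by rw [← hab]; abel
  intro m
  induction m with
  | zero => simpa using hab
  | succ m ih =>
    have ih' : a * b ^ (m + 1) = b ^ (m + 1) * a + (m + 1) • (c * b ^ m) := by
      rw [← ih]; abel
    calc a * b ^ (m + 2) - b ^ (m + 2) * a
        = (a * b ^ (m + 1)) * b - b ^ (m + 2) * a := by rw [pow_succ]; noncomm_ring
      _ = (b ^ (m + 1) * a + (m + 1) • (c * b ^ m)) * b - b ^ (m + 2) * a := by rw [ih']
      _ = b ^ (m + 1) * (a * b) + (m + 1) • (c * (b ^ m * b)) - b ^ (m + 2) * a := by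
            rw [add_mul, smul_mul_assoc, mul_assoc, mul_assoc]
      _ = b ^ (m + 1) * (b * a) + b ^ (m + 1) * c + (m + 1) • (c * b ^ (m + 1))
            - b ^ (m + 2) * a := by
            rw [hba, mul_add, ← pow_succ]
      _ = b ^ (m + 2) * a + c * b ^ (m + 1) + (m + 1) • (c * b ^ (m + 1))
            - b ^ (m + 2) * a := by
            rw [← mul_assoc, ← pow_succ, ← comm_pow hbc (m + 1)]
      _ = (m + 2) • (c * b ^ (m + 1)) := by simp only [add_nsmul, one_nsmul, two_nsmul]; abel

private lemma step2 {a b c : R} (hab : a * b - b * a = c) (hac : a * c = c * a)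
    (hbc : b * c = c * b) (n : ℕ) :
    ∀ k ≤ n, ((mulLeft ℂ a - mulRight ℂ a) ^ k) (b ^ n)
      = (n.descFactorial k) • (c ^ k * b ^ (n - k)) := by
  set F := mulLeft ℂ a - mulRight ℂ a with hF
  have hFapp : ∀ x : R, F x = a * x - x * a := by
    intro x; simp [hF, LinearMap.sub_apply, mulLeft_apply, mulRight_apply]
  intro k
  induction k with
  | zero => intro _; simp
  | succ k ih =>
    intro hk
    have hk' : k ≤ n := by omega
    rw [pow_succ', Module.End.mul_apply, ih hk', map_nsmul, hFapp]
    have hca : ∀ m : ℕ, a * c ^ m = c ^ m * a := by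
      intro m
      induction m with
      | zero => simp
      | succ m ihm => rw [pow_succ, ← mul_assoc, ihm, mul_assoc, hac, ← mul_assoc]
    have hbn : n - k = (n - (k + 1)) + 1 := by omega
    have hstep := step1 hab hbc (n - (k + 1))
    have h1 : a * (c ^ k * b ^ (n - k)) - c ^ k * b ^ (n - k) * a
        = c ^ k * (a * b ^ (n - k) - b ^ (n - k) * a) := by
      rw [mul_sub, ← mul_assoc, hca k, mul_assoc, mul_assoc]
    rw [h1, hbn, hstep]
    rw [Nat.descFactorial_succ]
    rw [mul_smul_comm, ← mul_assoc, ← pow_succ, smul_smul]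
    have hnk : n - (k + 1) + 1 = n - k := by omega
    rw [hnk, Nat.mul_comm]

private lemma step3 {a : R} (n : ℕ) (x : R) :
    ((mulLeft ℂ a - mulRight ℂ a) ^ n) x
      = ∑ pq ∈ Finset.HasAntidiagonal.antidiagonal n, (n.choose pq.1) • (a ^ pq.1 * x * (-a) ^ pq.2) := by
  have hF : mulLeft ℂ a - mulRight ℂ a = mulLeft ℂ a + mulRight ℂ (-a) := by
    ext y; simp [LinearMap.sub_apply, LinearMap.add_apply, mulLeft_apply, mulRight_apply, mul_neg, sub_eq_add_neg]
  have hcomm : Commute (mulLeft ℂ a) (mulRight ℂ (-a)) := commute_mulLeft_right a (-a)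
  rw [hF, hcomm.add_pow']
  rw [LinearMap.sum_apply]
  refine Finset.sum_congr rfl fun pq _ => ?_
  rw [LinearMap.smul_apply, Module.End.mul_apply, pow_mulLeft, pow_mulRight,
    mulRight_apply, mulLeft_apply, mul_assoc]

private lemma divided_identity {a b c : R} (hab : a * b - b * a = c) (hac : a * c = c * a)
    (hbc : b * c = c * b) (n : ℕ) :
    ((n.factorial : ℂ)⁻¹) • c ^ n
      = ∑ pq ∈ Finset.HasAntidiagonal.antidiagonal n, ((-1 : ℤ) ^ pq.2) •
          ((((pq.1.factorial : ℂ))⁻¹ • a ^ pq.1) * (((n.factorial : ℂ))⁻¹ • b ^ n)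
            * (((pq.2.factorial : ℂ))⁻¹ • a ^ pq.2)) := by
  have key : (n.factorial) • c ^ n
      = ∑ pq ∈ Finset.HasAntidiagonal.antidiagonal n, (n.choose pq.1) • (a ^ pq.1 * b ^ n * (-a) ^ pq.2) := by
    have h2 := step2 hab hac hbc n n le_rfl
    rw [Nat.descFactorial_self, Nat.sub_self, pow_zero, mul_one] at h2
    rw [← h2, step3]
  have hfac : (n.factorial : ℂ) ≠ 0 := by exact_mod_cast n.factorial_ne_zero
  have lhs_eq : ((n.factorial : ℂ)⁻¹) • c ^ n
      = ((n.factorial : ℂ)⁻¹ * (n.factorial : ℂ)⁻¹) • ((n.factorial) • c ^ n) := by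
    rw [← Nat.cast_smul_eq_nsmul ℂ, smul_smul]
    congr 1
    field_simp
  rw [lhs_eq, key, Finset.smul_sum]
  refine Finset.sum_congr rfl fun pq hpq => ?_
  obtain ⟨p, q⟩ := pq
  have hpqn : p + q = n := Finset.HasAntidiagonal.mem_antidiagonal.mp hpq
  simp only
  have hneg : (-a : R) ^ q = ((-1 : ℂ) ^ q) • a ^ q := by
    rw [neg_pow, Algebra.smul_def, map_pow, map_neg, map_one]
  have hz : ∀ x : R, ((-1 : ℤ) ^ q) • x = ((-1 : ℂ) ^ q) • x := by
    intro x
    rw [← Int.cast_smul_eq_zsmul ℂ]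
    norm_num
  rw [hneg, hz, ← Nat.cast_smul_eq_nsmul ℂ (n.choose p)]
  simp only [smul_mul_assoc, mul_smul_comm, smul_smul]
  congr 1
  have hchoose : (n.choose p) * p.factorial * q.factorial = n.factorial := by
    have h := Nat.add_choose_mul_factorial_mul_factorial q p
    rw [Nat.add_comm q p] at h
    rw [mul_assoc, Nat.mul_comm q.factorial p.factorial, ← mul_assoc] at h
    rw [← hpqn]
    exact h
  have hc : ((n.choose p : ℂ)) * p.factorial * q.factorial = n.factorial := by
    exact_mod_cast congrArg (Nat.cast : ℕ → ℂ) hchoose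
  have hfp : (p.factorial : ℂ) ≠ 0 := by exact_mod_cast p.factorial_ne_zero
  have hfq : (q.factorial : ℂ) ≠ 0 := by exact_mod_cast q.factorial_ne_zero
  field_simp
  linear_combination hc

end Identity

section SL

variable {n : ℕ}
attribute [local instance] LieRing.ofAssociativeRing

private lemma eb_bracket (i j k : Fin n) (hji : j ≠ i) (hkj : k ≠ j) (hki : k ≠ i) :
    ⁅single i j hji.symm (1 : ℂ), single j k hkj.symm (1 : ℂ)⁆ = single i k hki.symm (1 : ℂ) := by
  apply Subtype.ext
  rw [sl_bracket]
  simp only [val_single]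
  rw [Matrix.single_mul_single_same, Matrix.single_mul_single_of_ne (h := hki)]
  rw [mul_one, sub_zero]

private lemma eb_bracket_zero (i j i' j' : Fin n) (hji : j ≠ i) (hji' : j' ≠ i')
    (h1 : j ≠ i') (h2 : j' ≠ i) :
    ⁅single i j hji.symm (1 : ℂ), single i' j' hji'.symm (1 : ℂ)⁆ = 0 := by
  apply Subtype.ext
  rw [sl_bracket]
  simp only [val_single]
  rw [Matrix.single_mul_single_of_ne (h := h1), Matrix.single_mul_single_of_ne (h := h2)]
  simp

private lemma uea_comm {x y : sl (Fin n) ℂ} (h : ⁅x, y⁆ = 0) :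
    ι ℂ x * ι ℂ y = ι ℂ y * ι ℂ x := by
  have h2 : ι ℂ ⁅x, y⁆ = ι ℂ x * ι ℂ y - ι ℂ y * ι ℂ x := by
    rw [LieHom.map_lie, Ring.lie_def]
  rw [h, map_zero] at h2
  exact sub_eq_zero.mp h2.symm

private lemma uea_bracket {x y z : sl (Fin n) ℂ} (h : ⁅x, y⁆ = z) :
    ι ℂ x * ι ℂ y - ι ℂ y * ι ℂ x = ι ℂ z := by
  have h2 : ι ℂ ⁅x, y⁆ = ι ℂ x * ι ℂ y - ι ℂ y * ι ℂ x := by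
    rw [LieHom.map_lie, Ring.lie_def]
  rw [h] at h2
  exact h2.symm

private lemma aux (n : ℕ) (d : ℕ) :
    ∀ (i j t : ℕ), j - i ≤ d → ∀ (hij : i ≤ j) (hj : j + 1 < n),
      (((t.factorial : ℂ))⁻¹ •
          (ι ℂ (single (⟨i, by exact Nat.lt_of_le_of_lt hij (Nat.lt_of_succ_lt hj)⟩ : Fin n) (⟨j + 1, hj⟩ : Fin n)
            (by rw [ne_eq, Fin.mk.injEq]; exact Nat.ne_of_lt (Nat.lt_succ_of_le hij)) (1 : ℂ))) ^ t)
        ∈ Subring.closure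
          {u : UniversalEnvelopingAlgebra ℂ (sl (Fin n) ℂ) |
            ∃ (i t : ℕ) (hi : i + 1 < n),
              u = ((t.factorial : ℂ)⁻¹) •
                (ι ℂ (single (⟨i, by exact Nat.lt_of_succ_lt hi⟩ : Fin n) (⟨i + 1, hi⟩ : Fin n)
                  (by rw [ne_eq, Fin.mk.injEq]; exact Nat.ne_of_lt (Nat.lt_succ_self i)) (1 : ℂ))) ^ t} := by
  induction d with
  | zero =>
    intro i j t hd hij hj
    have hij' : i = j := by omega
    subst hij'
    exact Subring.subset_closure ⟨i, t, hj, rfl⟩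
  | succ d ih =>
    intro i j t hd hij hj
    by_cases hcase : j - i ≤ d
    · exact ih i j t hcase hij hj
    have hlt : i < j := by omega
    obtain ⟨k, rfl⟩ : ∃ k, j = k + 1 := ⟨j - 1, by omega⟩
    -- a = E_{i, k+1}, b = E_{k+1, k+2}, c = E_{i, k+2}
    set iF : Fin n := ⟨i, by omega⟩ with hiF
    set jF : Fin n := ⟨k + 1, by omega⟩ with hjF
    set kF : Fin n := ⟨k + 1 + 1, hj⟩ with hkF
    have hji : jF ≠ iF := by simp [hjF, hiF, Fin.ext_iff]; omega
    have hkj : kF ≠ jF := by simp [hkF, hjF, Fin.ext_iff]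
    have hki : kF ≠ iF := by simp [hkF, hiF, Fin.ext_iff]; omega
    have hab : ι ℂ (single iF jF hji.symm (1 : ℂ)) * ι ℂ (single jF kF hkj.symm (1 : ℂ))
        - ι ℂ (single jF kF hkj.symm (1 : ℂ)) * ι ℂ (single iF jF hji.symm (1 : ℂ)) = ι ℂ (single iF kF hki.symm (1 : ℂ)) :=
      uea_bracket (eb_bracket iF jF kF hji hkj hki)
    have hac : ι ℂ (single iF jF hji.symm (1 : ℂ)) * ι ℂ (single iF kF hki.symm (1 : ℂ))
        = ι ℂ (single iF kF hki.symm (1 : ℂ)) * ι ℂ (single iF jF hji.symm (1 : ℂ)) := by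
      apply uea_comm
      apply eb_bracket_zero (hji := hji) (hji' := hki)
      · exact hji
      · simp [hkF, hiF, Fin.ext_iff]; omega
    have hbc : ι ℂ (single jF kF hkj.symm (1 : ℂ)) * ι ℂ (single iF kF hki.symm (1 : ℂ))
        = ι ℂ (single iF kF hki.symm (1 : ℂ)) * ι ℂ (single jF kF hkj.symm (1 : ℂ)) := by
      apply uea_comm
      apply eb_bracket_zero (hji := hkj) (hji' := hki)
      · simp [hkF, hiF, Fin.ext_iff]; omega
      · simp [hkF, hjF, Fin.ext_iff]
    have key := divided_identity hab hac hbc t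
    have goal_eq :
        (((t.factorial : ℂ))⁻¹ •
          (ι ℂ (single (⟨i, by omega⟩ : Fin n) (⟨k + 1 + 1, hj⟩ : Fin n)
            (by simp only [ne_eq, Fin.mk.injEq]; omega) (1 : ℂ))) ^ t)
        = (((t.factorial : ℂ))⁻¹ • (ι ℂ (single iF kF hki.symm (1 : ℂ))) ^ t) := rfl
    rw [goal_eq, key]
    apply Subring.sum_mem
    intro pq hpq
    apply Subring.zsmul_mem
    apply Subring.mul_mem
    apply Subring.mul_mem
    · exact ih i k pq.1 (by omega) (by omega) (by omega)
    · exact Subring.subset_closure ⟨k + 1, t, hj, rfl⟩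
    · exact ih i k pq.2 (by omega) (by omega) (by omega)

end SL

theorem stmt_5 (n : ℕ) (hn : 2 ≤ n) :
    Subring.closure
      {u : UniversalEnvelopingAlgebra ℂ (sl (Fin n) ℂ) |
        ∃ (i j t : ℕ) (_ : i ≤ j) (hj : j + 1 < n),
          u = ((t.factorial : ℂ)⁻¹) •
            (ι ℂ (single (⟨i, by omega⟩ : Fin n) (⟨j + 1, hj⟩ : Fin n)
              (by simp only [ne_eq, Fin.mk.injEq]; omega) (1 : ℂ))) ^ t}
    = Subring.closure
      {u : UniversalEnvelopingAlgebra ℂ (sl (Fin n) ℂ) |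
        ∃ (i t : ℕ) (hi : i + 1 < n),
          u = ((t.factorial : ℂ)⁻¹) •
            (ι ℂ (single (⟨i, by omega⟩ : Fin n) (⟨i + 1, hi⟩ : Fin n)
              (by simp only [ne_eq, Fin.mk.injEq]; omega) (1 : ℂ))) ^ t} := by
  apply le_antisymm
  · rw [Subring.closure_le]
    rintro u ⟨i, j, t, hij, hj, rfl⟩
    exact aux n (j - i) i j t le_rfl hij hj
  · rw [Subring.closure_le]
    rintro u ⟨i, t, hi, rfl⟩
    exact Subring.subset_closure ⟨i, i, t, le_rfl, hi, rfl⟩
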